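/- For every finite poset P that embeds as an induced subposet of [t]^n for large n, and every fixed t ≥ 2, either sat*([t]^n, P) = O(1) as n → ∞, or sat*([t]^n, P) ≥ log_t(n) for all n. -/

import Mathlib

open Filter

/-- An induced copy of the poset `P` inside the family `F`. -/
def InducedCopy (P : Type) [PartialOrder P] {α : Type} [PartialOrder α]
    (F : Set α) : Prop :=
  ∃ φ : P → α, Function.Injective φ ∧ (∀ x, φ x ∈ F) ∧ ∀ x y, φ x ≤ φ y ↔ x ≤ y

/-- `F` is induced `P`-free. -/
def PFree (P : Type) [PartialOrder P] {α : Type} [PartialOrder α] (F : Set α) : Prop :=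
  ¬ InducedCopy P F

/-- `F` is induced `P`-free and induced `P`-saturated. -/
def PSaturated (P : Type) [PartialOrder P] {α : Type} [PartialOrder α] (F : Set α) : Prop :=
  PFree P F ∧ ∀ g ∉ F, InducedCopy P (insert g F)

/-- The lifting operator `L_i`, copying coordinate `i` into a new last coordinate. -/
def lift {t n : ℕ} (i : Fin n) (f : Fin n → Fin t) : Fin (n + 1) → Fin t :=
  Fin.snoc f (f i)

/-- The coordinate-dropping operator `D_i`. -/
def drop {t n : ℕ} (i : Fin (n + 1)) (f : Fin (n + 1) → Fin t) : Fin n → Fin t :=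
  fun x => f (i.succAbove x)

/-- Coordinate `i` is separating for `F`. -/
def Separating {t n : ℕ} (F : Set (Fin n → Fin t)) (i : Fin n) : Prop :=
  ∃ f ∈ F, ∃ f' ∈ F, f ≠ f' ∧ (∀ x, x ≠ i → f x ≤ f' x) ∧ f' i < f i

/-- The induced saturation number `sat*([t]^n, P)`. -/
noncomputable def satStar (t n : ℕ) (P : Type) [PartialOrder P] : ℕ :=
  sInf {m | ∃ F : Set (Fin n → Fin t), PSaturated P F ∧ F.ncard = m}

/-- The antichain on `k` elements. -/
def AC (k : ℕ) := Fin k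

instance (k : ℕ) : PartialOrder (AC k) where
  le := Eq
  le_refl _ := rfl
  le_trans _ _ _ h h' := Eq.trans h h'
  le_antisymm _ _ h _ := h

/-- The unique cover twin property. -/
def UCTP (P : Type) [PartialOrder P] : Prop :=
  ∀ x y : P, y ⋖ x → ∃ y', y' ≠ y ∧ y' ≠ x ∧ y' ⋖ x


section Aux

variable {t n : ℕ}

lemma lift_apply_castSucc (i : Fin n) (f : Fin n → Fin t) (x : Fin n) :
    lift i f x.castSucc = f x := Fin.snoc_castSucc _ _ _

lemma lift_apply_last (i : Fin n) (f : Fin n → Fin t) :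
    lift i f (Fin.last n) = f i := Fin.snoc_last _ _

lemma lift_inj (i : Fin n) : Function.Injective (lift (t := t) i) := by
  intro f f' h
  funext x
  have h2 := congrFun h x.castSucc
  rwa [lift_apply_castSucc, lift_apply_castSucc] at h2

lemma lift_le_lift (i : Fin n) (f f' : Fin n → Fin t) :
    lift i f ≤ lift i f' ↔ f ≤ f' := by
  constructor
  · intro h x
    have h2 := h x.castSucc
    rwa [lift_apply_castSucc, lift_apply_castSucc] at h2
  · intro h y
    induction y using Fin.lastCases with
    | last => rw [lift_apply_last, lift_apply_last]; exact h i
    | cast x => rw [lift_apply_castSucc, lift_apply_castSucc]; exact h x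

/-- The substitute element in the base grid for an arbitrary `g` in the lifted grid. -/
def patch (i j : Fin n) (g : Fin (n + 1) → Fin t) : Fin n → Fin t :=
  Function.update (Function.update (fun x => g x.castSucc) i
      (max (g i.castSucc) (max (g j.castSucc) (g (Fin.last n))))) j
    (min (g i.castSucc) (min (g j.castSucc) (g (Fin.last n))))

lemma patch_apply_i {i j : Fin n} (hij : i ≠ j) (g : Fin (n + 1) → Fin t) :
    patch i j g i = max (g i.castSucc) (max (g j.castSucc) (g (Fin.last n))) := by
  unfold patch
  rw [Function.update_of_ne hij, Function.update_self]

lemma patch_apply_j {i j : Fin n} (g : Fin (n + 1) → Fin t) :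
    patch i j g j = min (g i.castSucc) (min (g j.castSucc) (g (Fin.last n))) := by
  unfold patch
  rw [Function.update_self]

lemma patch_apply {i j x : Fin n} (hxi : x ≠ i) (hxj : x ≠ j) (g : Fin (n + 1) → Fin t) :
    patch i j g x = g x.castSucc := by
  unfold patch
  rw [Function.update_of_ne hxj, Function.update_of_ne hxi]

lemma patch_le_iff {i j : Fin n} (hij : i ≠ j) (g : Fin (n + 1) → Fin t)
    {f : Fin n → Fin t} (hfij : f i = f j) :
    patch i j g ≤ f ↔ g ≤ lift i f := by
  constructor
  · intro h
    intro y
    induction y using Fin.lastCases with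
    | last =>
      rw [lift_apply_last]
      have hi := h i
      rw [patch_apply_i hij] at hi
      exact le_trans (le_trans (le_max_right _ _) (le_max_right _ _)) hi
    | cast x =>
      rw [lift_apply_castSucc]
      rcases eq_or_ne x i with rfl | hxi
      · have hi := h x
        rw [patch_apply_i hij] at hi
        exact le_trans (le_max_left _ _) hi
      rcases eq_or_ne x j with rfl | hxj
      · have hi := h i
        rw [patch_apply_i hij] at hi
        have : g x.castSucc ≤ f i := le_trans (le_trans (le_max_left _ _) (le_max_right _ _)) hi
        rwa [hfij] at this
      · have hx := h x
        rwa [patch_apply hxi hxj] at hx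
  · intro h x
    have hlast := h (Fin.last n)
    rw [lift_apply_last] at hlast
    have hcs : ∀ z : Fin n, g z.castSucc ≤ f z := by
      intro z
      have := h z.castSucc
      rwa [lift_apply_castSucc] at this
    rcases eq_or_ne x i with rfl | hxi
    · rw [patch_apply_i hij]
      refine max_le (hcs x) (max_le ?_ hlast)
      rw [hfij]; exact hcs j
    rcases eq_or_ne x j with rfl | hxj
    · rw [patch_apply_j]
      exact le_trans (min_le_left _ _) (le_trans (hcs i) (le_of_eq hfij))
    · rw [patch_apply hxi hxj]
      exact hcs x

lemma le_patch_iff {i j : Fin n} (hij : i ≠ j) (g : Fin (n + 1) → Fin t)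
    {f : Fin n → Fin t} (hfij : f i = f j) :
    f ≤ patch i j g ↔ lift i f ≤ g := by
  constructor
  · intro h
    intro y
    induction y using Fin.lastCases with
    | last =>
      rw [lift_apply_last]
      have hj := h j
      rw [patch_apply_j] at hj
      have : f j ≤ g (Fin.last n) := le_trans hj (le_trans (min_le_right _ _) (min_le_right _ _))
      rwa [← hfij] at this
    | cast x =>
      rw [lift_apply_castSucc]
      rcases eq_or_ne x i with rfl | hxi
      · have hj := h j
        rw [patch_apply_j] at hj
        have : f j ≤ g x.castSucc := le_trans hj (min_le_left _ _)
        rwa [← hfij] at this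
      rcases eq_or_ne x j with rfl | hxj
      · have hj := h x
        rw [patch_apply_j] at hj
        exact le_trans hj (le_trans (min_le_right _ _) (min_le_left _ _))
      · have hx := h x
        rwa [patch_apply hxi hxj] at hx
  · intro h x
    have hlast := h (Fin.last n)
    rw [lift_apply_last] at hlast
    have hcs : ∀ z : Fin n, f z ≤ g z.castSucc := by
      intro z
      have := h z.castSucc
      rwa [lift_apply_castSucc] at this
    rcases eq_or_ne x i with rfl | hxi
    · rw [patch_apply_i hij]
      exact le_trans (hcs x) (le_max_left _ _)
    rcases eq_or_ne x j with rfl | hxj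
    · rw [patch_apply_j]
      refine le_min ?_ (le_min ?_ ?_)
      · rw [← hfij]; exact hcs i
      · exact hcs x
      · rw [← hfij]; exact hlast
    · rw [patch_apply hxi hxj]
      exact hcs x

lemma patch_not_mem {i j : Fin n} (hij : i ≠ j) {F : Set (Fin n → Fin t)}
    {g : Fin (n + 1) → Fin t} (hg : g ∉ lift i '' F)
    (htwin : ∀ f ∈ F, f i = f j) : patch i j g ∉ F := by
  intro hw
  have h1 := htwin _ hw
  rw [patch_apply_i hij, patch_apply_j] at h1
  have hmm : max (g i.castSucc) (max (g j.castSucc) (g (Fin.last n))) ≤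
      min (g i.castSucc) (min (g j.castSucc) (g (Fin.last n))) := le_of_eq h1
  have hae : g i.castSucc = g j.castSucc := le_antisymm
    ((le_max_left _ _).trans (hmm.trans ((min_le_right _ _).trans (min_le_left _ _))))
    (((le_max_left _ _).trans (le_max_right _ _)).trans (hmm.trans (min_le_left _ _)))
  have hab : g i.castSucc = g (Fin.last n) := le_antisymm
    ((le_max_left _ _).trans (hmm.trans ((min_le_right _ _).trans (min_le_right _ _))))
    (((le_max_right _ _).trans (le_max_right _ _)).trans (hmm.trans (min_le_left _ _)))
  have hpa : patch i j g = fun x => g x.castSucc := by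
    funext x
    rcases eq_or_ne x i with rfl | hxi
    · rw [patch_apply_i hij, ← hae, ← hab, max_self, max_self]
    rcases eq_or_ne x j with rfl | hxj
    · rw [patch_apply_j, ← hae, ← hab, min_self, min_self]
    · rw [patch_apply hxi hxj]
  refine hg ⟨patch i j g, hw, ?_⟩
  funext y
  induction y using Fin.lastCases with
  | last =>
    rw [lift_apply_last, hpa]
    exact hab
  | cast x =>
    rw [lift_apply_castSucc, hpa]

lemma lift_saturated {P : Type} [PartialOrder P] {F : Set (Fin n → Fin t)}
    (hF : PSaturated P F) {i j : Fin n} (hij : i ≠ j)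
    (htwin : ∀ f ∈ F, f i = f j) : PSaturated P (lift i '' F) := by
  classical
  constructor
  · rintro ⟨φ, hinj, hmem, hord⟩
    choose ψ hψF hψ using hmem
    exact hF.1 ⟨ψ, fun x y hxy => hinj (by rw [← hψ x, ← hψ y, hxy]), hψF,
      fun x y => by rw [← hord x y, ← hψ x, ← hψ y, lift_le_lift]⟩
  · intro g hg
    have hw : patch i j g ∉ F := patch_not_mem hij hg htwin
    obtain ⟨φ, hinj, hmem, hord⟩ := hF.2 (patch i j g) hw
    have hmemF : ∀ x, φ x ≠ patch i j g → φ x ∈ F := fun x hx =>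
      (Set.mem_insert_iff.mp (hmem x)).resolve_left hx
    refine ⟨fun x => if φ x = patch i j g then g else lift i (φ x), ?_, ?_, ?_⟩
    · intro x y hxy
      dsimp only at hxy
      by_cases hx : φ x = patch i j g <;> by_cases hy : φ y = patch i j g
      · exact hinj (hx.trans hy.symm)
      · rw [if_pos hx, if_neg hy] at hxy
        exact absurd ⟨φ y, hmemF y hy, hxy.symm⟩ hg
      · rw [if_neg hx, if_pos hy] at hxy
        exact absurd ⟨φ x, hmemF x hx, hxy⟩ hg
      · rw [if_neg hx, if_neg hy] at hxy
        exact hinj (lift_inj i hxy)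
    · intro x
      dsimp only
      by_cases hx : φ x = patch i j g
      · rw [if_pos hx]; exact Set.mem_insert _ _
      · rw [if_neg hx]
        exact Set.mem_insert_iff.mpr (Or.inr ⟨φ x, hmemF x hx, rfl⟩)
    · intro x y
      dsimp only
      rw [← hord x y]
      by_cases hx : φ x = patch i j g <;> by_cases hy : φ y = patch i j g
      · rw [if_pos hx, if_pos hy, hx, hy]
        exact iff_of_true le_rfl le_rfl
      · rw [if_pos hx, if_neg hy, hx]
        exact (patch_le_iff hij g (htwin _ (hmemF y hy))).symm
      · rw [if_neg hx, if_pos hy, hy]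
        exact (le_patch_iff hij g (htwin _ (hmemF x hx))).symm
      · rw [if_neg hx, if_neg hy]
        exact lift_le_lift i _ _

lemma empty_pfree {P : Type} [PartialOrder P] [Nonempty P] {α : Type} [PartialOrder α] :
    PFree P (∅ : Set α) := by
  rintro ⟨φ, -, hmem, -⟩
  exact absurd (hmem (Classical.arbitrary P)) (Set.notMem_empty _)

lemma exists_saturated (t m : ℕ) (P : Type) [PartialOrder P] [Nonempty P] :
    ∃ F : Set (Fin m → Fin t), PSaturated P F := by
  obtain ⟨F, hF, hmax⟩ := Set.Finite.exists_maximalFor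
    (id : Set (Fin m → Fin t) → Set (Fin m → Fin t))
    {G : Set (Fin m → Fin t) | PFree P G} (Set.toFinite _) ⟨∅, empty_pfree⟩
  refine ⟨F, hF, fun g hgF => ?_⟩
  by_contra hcopy
  have h2 : F = insert g F := (Set.subset_insert g F).antisymm (hmax hcopy (Set.subset_insert g F))
  exact hgF (h2 ▸ Set.mem_insert g F)

lemma satStar_le_pow (t m : ℕ) (P : Type) [PartialOrder P] [Nonempty P] :
    satStar t m P ≤ t ^ m := by
  obtain ⟨F, hF⟩ := exists_saturated t m P
  have h1 : satStar t m P ≤ F.ncard := Nat.sInf_le ⟨F, hF, rfl⟩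
  refine h1.trans ?_
  have h2 := Set.ncard_le_ncard (Set.subset_univ F) (Set.toFinite _)
  rwa [Set.ncard_univ, Nat.card_eq_fintype_card, Fintype.card_fun,
    Fintype.card_fin, Fintype.card_fin] at h2

lemma satStar_isEmpty (t n : ℕ) (P : Type) [PartialOrder P] (hP : IsEmpty P) :
    satStar t n P = 0 := by
  unfold satStar
  convert Nat.sInf_empty
  ext m
  simp only [Set.mem_setOf_eq, Set.mem_empty_iff_false, iff_false, not_exists]
  rintro F ⟨⟨hfree, -⟩, -⟩
  exact hfree ⟨fun p => hP.elim p, fun p => hP.elim p, fun p => hP.elim p, fun p => hP.elim p⟩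

end Aux

theorem stmt3 (t : ℕ) (ht : 2 ≤ t) (P : Type) [PartialOrder P] [Finite P]
    (hembed : ∃ n₀ : ℕ, InducedCopy P (Set.univ : Set (Fin n₀ → Fin t))) :
    (∃ C : ℕ, ∀ n : ℕ, satStar t n P ≤ C) ∨
    (∀ n : ℕ, Real.logb t n ≤ (satStar t n P : ℝ)) := by
  classical
  by_cases hP : Nonempty P
  · by_cases hlog : ∀ n : ℕ, Real.logb t n ≤ (satStar t n P : ℝ)
    · exact Or.inr hlog
    · left
      push_neg at hlog
      obtain ⟨n₁, hn₁⟩ := hlog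
      set s := satStar t n₁ P with hs
      have ht1 : (1 : ℝ) < (t : ℝ) := by exact_mod_cast lt_of_lt_of_le one_lt_two ht
      have hlogpos : 0 < Real.logb t n₁ := lt_of_le_of_lt (Nat.cast_nonneg s) hn₁
      have hn₁pos : 0 < (n₁ : ℝ) := by
        rcases Nat.eq_zero_or_pos n₁ with rfl | h
        · simp at hlogpos
        · exact_mod_cast h
      have hpow : t ^ s < n₁ := by
        have h2 := (Real.lt_logb_iff_rpow_lt ht1 hn₁pos).mp hn₁
        rw [Real.rpow_natCast] at h2
        exact_mod_cast h2
      have hSne : Set.Nonempty {m | ∃ F : Set (Fin n₁ → Fin t), PSaturated P F ∧ F.ncard = m} := by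
        obtain ⟨F, hF⟩ := exists_saturated t n₁ P
        exact ⟨F.ncard, F, hF, rfl⟩
      have hsmem : s ∈ {m | ∃ F : Set (Fin n₁ → Fin t), PSaturated P F ∧ F.ncard = m} :=
        Nat.sInf_mem hSne
      obtain ⟨F₁, hF₁sat, hF₁card⟩ := hsmem
      haveI : Fintype ↥F₁ := Fintype.ofFinite _
      have hcardF₁ : Fintype.card ↥F₁ = s := by
        rw [← Nat.card_eq_fintype_card, Nat.card_coe_set_eq, hF₁card]
      have hlt : Fintype.card (↥F₁ → Fin t) < Fintype.card (Fin n₁) := by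
        rw [Fintype.card_fun, Fintype.card_fin, Fintype.card_fin, hcardF₁]
        exact hpow
      obtain ⟨i, j, hij, hije⟩ :=
        Fintype.exists_ne_map_eq_of_card_lt (fun (x : Fin n₁) => fun f : ↥F₁ => f.1 x) hlt
      have htwin : ∀ f ∈ F₁, f i = f j := fun f hf => congrFun hije ⟨f, hf⟩
      have key : ∀ m, n₁ ≤ m → ∃ F : Set (Fin m → Fin t), PSaturated P F ∧ F.ncard = s ∧
          ∃ i' j' : Fin m, i' ≠ j' ∧ ∀ f ∈ F, f i' = f j' := by
        intro m hm
        induction m, hm using Nat.le_induction with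
        | base => exact ⟨F₁, hF₁sat, hF₁card, i, j, hij, htwin⟩
        | succ m hm ih =>
          obtain ⟨F, hsat, hcard, i', j', hij', htw⟩ := ih
          refine ⟨lift i' '' F, lift_saturated hsat hij' htw, ?_, i'.castSucc, Fin.last m,
            ?_, ?_⟩
          · rw [Set.ncard_image_of_injective _ (lift_inj i')]; exact hcard
          · exact (Fin.castSucc_lt_last i').ne
          · rintro f ⟨f₀, hf₀, rfl⟩
            rw [lift_apply_castSucc, lift_apply_last]
      refine ⟨t ^ n₁, fun n => ?_⟩
      rcases le_or_gt n₁ n with hn | hn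
      · obtain ⟨F, hsat, hcard, -⟩ := key n hn
        have h1 : satStar t n P ≤ s := Nat.sInf_le ⟨F, hsat, hcard⟩
        exact h1.trans (satStar_le_pow t n₁ P)
      · exact (satStar_le_pow t n P).trans (Nat.pow_le_pow_right (by omega) hn.le)
  · rw [not_nonempty_iff] at hP
    exact Or.inl ⟨0, fun n => le_of_eq (satStar_isEmpty t n P hP)⟩
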